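/- Let B = (Q, I, F, δ) be a Boolean finite automaton over alphabet α. Consider the deterministic finite automaton D with state type Q → Prop, initial state F, step function D.step v a := fun q => δ q a v, and accepting set {v | I v}. Then for every word w : List α, D accepts w if and only if B accepts w.reverse; that is, the language of D is exactly the set of reversals of words in L(B). In particular the reversed Boolean finite automaton has a deterministic transition function. -/

import Mathlib

/-- A Boolean finite automaton over alphabet `α` with state type `Q`. -/
structure BFA (α : Type*) (Q : Type*) where
  I : (Q → Prop) → Prop
  F : Q → Prop
  δ : Q → α → (Q → Prop) → Prop

/-- A word `w` is accepted by the BFA `B` iff, after substituting transitions for states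
symbol by symbol starting from the initial Boolean function, the resulting Boolean function
holds on the final assignment. -/
def BFA.Accepts {α Q : Type*} (B : BFA α Q) (w : List α) : Prop :=
  (List.foldl (fun G a => fun v => G (fun q => B.δ q a v)) B.I w) B.F

/-- The reversed BFA, viewed as a deterministic automaton on valuations: the initial state is
the final assignment `F`, a step substitutes the current valuation into the transition function,
and a valuation is accepting iff the initial Boolean function `I` holds on it. -/
def BFA.toReverseDFA {α Q : Type*} (B : BFA α Q) : DFA α (Q → Prop) :=
  { step := fun v a => fun q => B.δ q a v
    start := B.F
    accept := { v | B.I v } }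

/-- The deterministic automaton on valuations accepts exactly the reversals of words accepted
by the BFA; in particular the reversed BFA has a deterministic transition function. -/
theorem BFA.toReverseDFA_accepts {α Q : Type*} (B : BFA α Q) (w : List α) :
    w ∈ B.toReverseDFA.accepts ↔ B.Accepts w.reverse := by
  have key : ∀ (w : List α) (v : Q → Prop),
      B.toReverseDFA.evalFrom v w ∈ B.toReverseDFA.accept ↔
        (List.foldr (fun a G => fun u => G (fun q => B.δ q a u))
          B.I w) v := by
    intro w
    induction w with
    | nil => intro v; rfl
    | cons a w ih =>
        intro v
        simpa [DFA.evalFrom, BFA.toReverseDFA] using ih (fun q => B.δ q a v)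
  rw [DFA.mem_accepts]
  rw [BFA.Accepts, List.foldl_reverse]
  exact key w B.F
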